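/- Let H be a complex Hilbert space with inner product ⟨·,·⟩ linear in the first and conjugate-linear in the second argument. Let 𝒜, C : H → H be bounded linear operators with 𝒜 self-adjoint, let σ > 0, p < 0 be real, and set A := p·Id + 𝒜. Let u_k, u_j ∈ H and real numbers λ_k, λ_j ≤ 0 with 𝒜 u_k = λ_k·u_k and 𝒜 u_j = λ_j·u_j, and suppose V : H → H is a bounded linear operator satisfying the Lyapunov equation for (A, C, σ). Then ⟨V u_k, u_j⟩ = −σ²·⟨C u_k, u_j⟩/(2p + λ_k + λ_j). In particular, if λ_{k*} = 0 and 𝒜 u_{k*} = 0 for some unit vector u_{k*}, then p·⟨V u_{k*}, u_{k*}⟩ = −σ²·⟨C u_{k*}, u_{k*}⟩/2, so if ⟨C u_{k*}, u_{k*}⟩ ≠ 0 then |⟨V u_{k*}, u_{k*}⟩| → +∞ as p → 0⁻. -/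

import Mathlib

open ContinuousLinearMap Filter Topology

local notation "⟪" x ", " y "⟫" => @inner ℂ _ _ x y

lemma gen_key {H : Type*} [NormedAddCommGroup H] [InnerProductSpace ℂ H]
    [CompleteSpace H] (𝓐 C : H →L[ℂ] H) (h𝓐 : IsSelfAdjoint 𝓐)
    (σ : ℝ) (W : H →L[ℂ] H) (p : ℝ) (hp : p < 0)
    (hW : ∀ g h : H, ⟪h, ((p : ℂ) • ContinuousLinearMap.id ℂ H + 𝓐) (W g)⟫
        + ⟪h, W (adjoint ((p : ℂ) • ContinuousLinearMap.id ℂ H + 𝓐) g)⟫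
        = -(σ ^ 2 : ℂ) * ⟪h, C g⟫)
    (uk uj : H) (lk lj : ℝ) (hlk : lk ≤ 0) (hlj : lj ≤ 0)
    (hk : 𝓐 uk = (lk : ℂ) • uk) (hj : 𝓐 uj = (lj : ℂ) • uj) :
    ⟪uj, W uk⟫ = -(σ ^ 2 : ℂ) * ⟪uj, C uk⟫ / (2 * (p : ℂ) + (lk : ℂ) + (lj : ℂ)) := by
  set A : H →L[ℂ] H := (p : ℂ) • ContinuousLinearMap.id ℂ H + 𝓐 with hA
  have hA_sa : IsSelfAdjoint A := by
    refine IsSelfAdjoint.add ?_ h𝓐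
    have hid : IsSelfAdjoint (ContinuousLinearMap.id ℂ H) :=
      isSelfAdjoint_iff_isSymmetric.mpr fun x y => by simp
    have hpr : IsSelfAdjoint (p : ℂ) := by
      simp [IsSelfAdjoint, Complex.conj_ofReal]
    exact hpr.smul hid
  have hAuk : A uk = ((p : ℂ) + lk) • uk := by
    simp [hA, hk, add_smul]
  have hAuj : A uj = ((p : ℂ) + lj) • uj := by
    simp [hA, hj, add_smul]
  have key := hW uk uj
  have h1 : ⟪uj, A (W uk)⟫ = ((p : ℂ) + lj) * ⟪uj, W uk⟫ := by
    rw [← adjoint_inner_left, hA_sa.adjoint_eq, hAuj, inner_smul_left]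
    rw [map_add, Complex.conj_ofReal, Complex.conj_ofReal]
  have h2 : ⟪uj, W (adjoint A uk)⟫ = ((p : ℂ) + lk) * ⟪uj, W uk⟫ := by
    rw [hA_sa.adjoint_eq, hAuk, map_smul, inner_smul_right]
  rw [h1, h2] at key
  have hden : (2 * (p : ℂ) + lk + lj) ≠ 0 := by
    have : ((2 * p + lk + lj : ℝ) : ℂ) ≠ 0 := by
      rw [Complex.ofReal_ne_zero]
      nlinarith
    convert this using 1
    push_cast; ring
  rw [eq_div_iff hden]
  rw [← key]; ring

/-- `V` satisfies the Lyapunov equation for `(A, C, σ)`. -/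
def LyapunovEq {H : Type*} [NormedAddCommGroup H] [InnerProductSpace ℂ H]
    [CompleteSpace H] (A C : H →L[ℂ] H) (σ : ℝ) (V : H →L[ℂ] H) : Prop :=
  ∀ g h : H, ⟪h, A (V g)⟫ + ⟪h, V (adjoint A g)⟫ = -(σ ^ 2 : ℂ) * ⟪h, C g⟫

theorem statement2 {H : Type*} [NormedAddCommGroup H] [InnerProductSpace ℂ H]
    [CompleteSpace H] (𝓐 C : H →L[ℂ] H) (h𝓐 : IsSelfAdjoint 𝓐)
    (σ : ℝ) (hσ : 0 < σ)
    (V : ℝ → H →L[ℂ] H)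
    (hV : ∀ p < (0 : ℝ),
      LyapunovEq ((p : ℂ) • ContinuousLinearMap.id ℂ H + 𝓐) C σ (V p))
    (uk uj : H) (lk lj : ℝ) (hlk : lk ≤ 0) (hlj : lj ≤ 0)
    (hk : 𝓐 uk = (lk : ℂ) • uk) (hj : 𝓐 uj = (lj : ℂ) • uj)
    (ustar : H) (hnorm : ‖ustar‖ = 1) (hstar : 𝓐 ustar = 0) :
    (∀ p < (0 : ℝ), ⟪uj, V p uk⟫
        = -(σ ^ 2 : ℂ) * ⟪uj, C uk⟫ / (2 * (p : ℂ) + (lk : ℂ) + (lj : ℂ))) ∧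
    (∀ p < (0 : ℝ), (p : ℂ) * ⟪ustar, V p ustar⟫
        = -(σ ^ 2 : ℂ) * ⟪ustar, C ustar⟫ / 2) ∧
    (⟪ustar, C ustar⟫ ≠ 0 →
      Tendsto (fun p => ‖⟪ustar, V p ustar⟫‖) (𝓝[<] (0 : ℝ)) atTop) := by
  have hstar' : 𝓐 ustar = ((0 : ℝ) : ℂ) • ustar := by simp [hstar]
  have part1 : ∀ p < (0 : ℝ), ⟪uj, V p uk⟫
      = -(σ ^ 2 : ℂ) * ⟪uj, C uk⟫ / (2 * (p : ℂ) + (lk : ℂ) + (lj : ℂ)) :=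
    fun p hp => gen_key 𝓐 C h𝓐 σ (V p) p hp (hV p hp) uk uj lk lj hlk hlj hk hj
  have hs : ∀ p < (0 : ℝ), ⟪ustar, V p ustar⟫
      = -(σ ^ 2 : ℂ) * ⟪ustar, C ustar⟫ / (2 * (p : ℂ)) := by
    intro p hp
    have := gen_key 𝓐 C h𝓐 σ (V p) p hp (hV p hp) ustar ustar 0 0 le_rfl le_rfl
      hstar' hstar'
    simpa using this
  refine ⟨part1, ?_, ?_⟩
  · intro p hp
    rw [hs p hp]
    have hpne : ((p : ℂ)) ≠ 0 := by
      simp [Complex.ofReal_ne_zero]; exact ne_of_lt hp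
    field_simp
  · intro hc
    have hcpos : 0 < ‖⟪ustar, C ustar⟫‖ := norm_pos_iff.mpr hc
    have hkpos : 0 < σ ^ 2 * ‖⟪ustar, C ustar⟫‖ / 2 := by positivity
    have h_neg : Tendsto (fun p : ℝ => -p) (𝓝[<] (0 : ℝ)) (𝓝[>] (0 : ℝ)) := by
      have h0 : Tendsto (fun p : ℝ => -p) (𝓝 (0 : ℝ)) (𝓝 (0 : ℝ)) := by
        simpa using (continuous_neg.tendsto (0 : ℝ))
      apply tendsto_nhdsWithin_of_tendsto_nhds_of_eventually_within _
        (h0.mono_left nhdsWithin_le_nhds)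
      filter_upwards [self_mem_nhdsWithin] with x hx
      exact Set.mem_Ioi.mpr (neg_pos.mpr hx)
    have h_inv : Tendsto (fun p : ℝ => (-p)⁻¹) (𝓝[<] (0 : ℝ)) atTop :=
      tendsto_inv_nhdsGT_zero.comp h_neg
    have h_main := h_inv.const_mul_atTop hkpos
    refine h_main.congr' ?_
    filter_upwards [self_mem_nhdsWithin] with p hp
    rw [hs p hp]
    have hpne : p ≠ 0 := ne_of_lt hp
    rw [norm_div, norm_mul, norm_neg, norm_mul]
    simp only [norm_pow, Complex.norm_real, Real.norm_eq_abs, Complex.norm_ofNat]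
    rw [abs_of_pos hσ, abs_of_neg hp]
    field_simp
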